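/- Suboptimality in regularized value implies policy closeness on visited states: under the main theorem's hypotheses, if (1−γ)·E_{s∼ρ}[V_Ω^⋆(s) − V_Ω^π(s)] ≤ ε, then E_{s∼μ^π}[D_Ω(π(s,·), π*_Ω(s,·))] ≤ ε; in particular, since D_Ω ≥ 0 by convexity of Ω and μ^π(s) > 0 whenever ρ(s) > 0, suboptimality 0 forces π(s,·) = π*_Ω(s,·) on all states with μ^π(s) > 0 (using strict convexity of Ω). -/

import Mathlib

open Filter Topology

lemma firstorder {A : Type*} [Fintype A] (Ω : (A → ℝ) → ℝ) (hΩdiff : ContDiff ℝ 1 Ω)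
    (Q : A → ℝ) (x p : A → ℝ) (hx : x ∈ stdSimplex ℝ A) (hp : p ∈ stdSimplex ℝ A)
    (hmax : ∀ q ∈ stdSimplex ℝ A, ∑ a, q a * Q a - Ω q ≤ ∑ a, x a * Q a - Ω x) :
    ∑ a, (p a - x a) * Q a ≤ fderiv ℝ Ω x (p - x) := by
  classical
  set v : A → ℝ := p - x with hv
  set φ : ℝ → ℝ := fun t => (∑ a, x a * Q a) + t * (∑ a, v a * Q a) - Ω (x + t • v) with hφ
  have hline : HasDerivAt (fun t : ℝ => x + t • v) v 0 := by
    have h1 : HasDerivAt (fun t : ℝ => t • v) ((1:ℝ) • v) 0 :=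
      (hasDerivAt_id 0).smul_const v
    simpa using h1.const_add x
  have hΩd : HasDerivAt (fun t : ℝ => Ω (x + t • v)) (fderiv ℝ Ω x v) 0 := by
    have hdiff : HasFDerivAt Ω (fderiv ℝ Ω x) (x + (0:ℝ) • v) := by
      simpa using (hΩdiff.differentiable one_ne_zero x).hasFDerivAt
    have := hdiff.comp_hasDerivAt (0:ℝ) hline
    exact this
  have hφd : HasDerivAt φ ((∑ a, v a * Q a) - fderiv ℝ Ω x v) 0 := by
    have h1 : HasDerivAt (fun t : ℝ => (∑ a, x a * Q a) + t * (∑ a, v a * Q a))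
        (∑ a, v a * Q a) 0 := by
      simpa using ((hasDerivAt_id (0:ℝ)).mul_const (∑ a, v a * Q a)).const_add (∑ a, x a * Q a)
    exact h1.sub hΩd
  have hle : ∀ t : ℝ, 0 ≤ t → t ≤ 1 → φ t ≤ φ 0 := by
    intro t ht0 ht1
    have hmem : x + t • v ∈ stdSimplex ℝ A := by
      have := (convex_stdSimplex ℝ A) hx hp (by linarith : (0:ℝ) ≤ 1 - t) ht0 (by ring)
      convert this using 1
      funext a
      simp [hv]
      ring
    have := hmax _ hmem
    have hsum : ∑ a, (x a + t * v a) * Q a = (∑ a, x a * Q a) + t * (∑ a, v a * Q a) := by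
      simp [add_mul, Finset.sum_add_distrib, Finset.mul_sum, mul_assoc]
    simp only [hφ]
    simp only [Pi.add_apply, Pi.smul_apply, smul_eq_mul] at this
    rw [hsum] at this
    simp only [zero_mul, zero_smul, add_zero]
    linarith
  have hslope : Tendsto (slope φ 0) (𝓝[>] 0) (𝓝 ((∑ a, v a * Q a) - fderiv ℝ Ω x v)) := by
    have := hasDerivAt_iff_tendsto_slope.1 hφd
    exact this.mono_left (nhdsWithin_mono 0 (fun t ht => ne_of_gt ht))
  have hev : ∀ᶠ t in 𝓝[>] (0:ℝ), slope φ 0 t ≤ 0 := by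
    filter_upwards [Ioo_mem_nhdsGT_of_mem (Set.mem_Ico.2 ⟨le_rfl, one_pos⟩)] with t ht
    have h1 := hle t (le_of_lt ht.1) (le_of_lt ht.2)
    rw [slope_def_field]
    simp only [sub_zero]
    exact div_nonpos_of_nonpos_of_nonneg (by linarith) (le_of_lt ht.1)
  have hd : (∑ a, v a * Q a) - fderiv ℝ Ω x v ≤ 0 := le_of_tendsto hslope hev
  have hsv : ∑ a, (p a - x a) * Q a = ∑ a, v a * Q a := by simp [hv]
  linarith [hd, hsv.le]

/-- Suboptimality in regularized value implies policy closeness on visited states: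
if `(1−γ)·E_{s∼ρ}[V_Ω^⋆ − V_Ω^π] ≤ ε`, then `E_{s∼μ^π}[D_Ω(π(s,·), π⋆(s,·))] ≤ ε`;
and if the suboptimality is `0` then `π(s,·) = π⋆(s,·)` on all states with `μ^π(s) > 0`. -/
theorem suboptimality_implies_policy_closeness
    {S A : Type*} [Fintype S] [Fintype A]
    (P : S → A → S → ℝ) (hP0 : ∀ s a s', 0 ≤ P s a s') (hP1 : ∀ s a, ∑ s', P s a s' = 1)
    (r : S → A → ℝ) (ρ : S → ℝ) (hρ : ρ ∈ stdSimplex ℝ S)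
    (γ : ℝ) (hγ0 : 0 ≤ γ) (hγ1 : γ < 1)
    (Ω : (A → ℝ) → ℝ) (hΩdiff : ContDiff ℝ 1 Ω)
    (hΩconv : StrictConvexOn ℝ (stdSimplex ℝ A) Ω)
    -- optimal regularized value functions and optimal policy
    (Qstar : S → A → ℝ) (Vstar : S → ℝ) (πstar : S → A → ℝ)
    (hπstar : ∀ s, πstar s ∈ stdSimplex ℝ A)
    (hQstar : ∀ s a, Qstar s a = r s a + γ * ∑ s', P s a s' * Vstar s')
    (hVstar : ∀ s, Vstar s = ∑ a, πstar s a * Qstar s a - Ω (πstar s))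
    (hmax : ∀ s, ∀ p ∈ stdSimplex ℝ A,
      ∑ a, p a * Qstar s a - Ω p ≤ ∑ a, πstar s a * Qstar s a - Ω (πstar s))
    -- an arbitrary policy `π` with its regularized value functions
    (π : S → A → ℝ) (hπ : ∀ s, π s ∈ stdSimplex ℝ A)
    (Qπ : S → A → ℝ) (Vπ : S → ℝ)
    (hQπ : ∀ s a, Qπ s a = r s a + γ * ∑ s', P s a s' * Vπ s')
    (hVπ : ∀ s, Vπ s = ∑ a, π s a * Qπ s a - Ω (π s))
    -- discounted stationary distribution of `π`
    (μ : S → ℝ)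
    (hμ : ∀ s', μ s' = (1 - γ) * ρ s' + γ * ∑ s, (∑ a, P s a s' * π s a) * μ s)
    (ε : ℝ)
    (hsub : (1 - γ) * ∑ s, ρ s * (Vstar s - Vπ s) ≤ ε) :
    (∑ s, μ s * (Ω (π s) - Ω (πstar s) - fderiv ℝ Ω (πstar s) (π s - πstar s)) ≤ ε) ∧
    ((1 - γ) * ∑ s, ρ s * (Vstar s - Vπ s) = 0 → ∀ s, 0 < μ s → π s = πstar s) := by
  classical
  have hρ0 : ∀ s, 0 ≤ ρ s := fun s => hρ.1 s
  have hπ0 : ∀ s a, 0 ≤ π s a := fun s a => (hπ s).1 a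
  have hπ1 : ∀ s, ∑ a, π s a = 1 := fun s => (hπ s).2
  -- column sums of the transition matrix of π are 1
  have hcol : ∀ s, ∑ s', ∑ a, P s a s' * π s a = 1 := by
    intro s
    rw [Finset.sum_comm]
    have : ∀ a, ∑ s', P s a s' * π s a = π s a := by
      intro a
      rw [← Finset.sum_mul, hP1, one_mul]
    simp only [this]
    exact hπ1 s
  have hc0 : ∀ s s', 0 ≤ ∑ a, P s a s' * π s a :=
    fun s s' => Finset.sum_nonneg fun a _ => mul_nonneg (hP0 s a s') (hπ0 s a)
  -- nonnegativity of μ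
  have hμ0 : ∀ s, 0 ≤ μ s := by
    by_contra hcon
    push_neg at hcon
    obtain ⟨s₀, hs₀⟩ := hcon
    set N : S → ℝ := fun s => max 0 (-μ s) with hN
    have hNge : ∀ s, -μ s ≤ N s := fun s => le_max_right _ _
    have hN0 : ∀ s, 0 ≤ N s := fun s => le_max_left _ _
    have key : ∀ s', N s' ≤ γ * ∑ s, (∑ a, P s a s' * π s a) * N s := by
      intro s'
      have hrhs0 : 0 ≤ γ * ∑ s, (∑ a, P s a s' * π s a) * N s :=
        mul_nonneg hγ0 (Finset.sum_nonneg fun s _ => mul_nonneg (hc0 s s') (hN0 s))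
      have h1 : -μ s' ≤ γ * ∑ s, (∑ a, P s a s' * π s a) * N s := by
        rw [hμ s']
        have h2 : γ * ∑ s, (∑ a, P s a s' * π s a) * (-μ s)
            ≤ γ * ∑ s, (∑ a, P s a s' * π s a) * N s := by
          apply mul_le_mul_of_nonneg_left _ hγ0
          exact Finset.sum_le_sum fun s _ => mul_le_mul_of_nonneg_left (hNge s) (hc0 s s')
        have h3 : γ * ∑ s, (∑ a, P s a s' * π s a) * (-μ s)
            = -(γ * ∑ s, (∑ a, P s a s' * π s a) * μ s) := by
          rw [Finset.mul_sum, Finset.mul_sum, ← Finset.sum_neg_distrib]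
          exact Finset.sum_congr rfl fun s _ => by ring
        have h4 : 0 ≤ (1 - γ) * ρ s' := mul_nonneg (by linarith) (hρ0 s')
        rw [h3] at h2
        linarith
      exact max_le hrhs0 h1
    have hsumN : ∑ s', N s' ≤ γ * ∑ s', N s' := by
      calc ∑ s', N s' ≤ ∑ s', γ * ∑ s, (∑ a, P s a s' * π s a) * N s :=
            Finset.sum_le_sum fun s' _ => key s'
        _ = γ * ∑ s', ∑ s, (∑ a, P s a s' * π s a) * N s := by rw [← Finset.mul_sum]
        _ = γ * ∑ s, (∑ s', ∑ a, P s a s' * π s a) * N s := by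
            rw [Finset.sum_comm]
            congr 1
            exact Finset.sum_congr rfl fun s _ => by rw [Finset.sum_mul]
        _ = γ * ∑ s, N s := by
            congr 1
            exact Finset.sum_congr rfl fun s _ => by rw [hcol s, one_mul]
    have hNpos : 0 < ∑ s', N s' := by
      apply Finset.sum_pos' (fun s _ => hN0 s)
      exact ⟨s₀, Finset.mem_univ s₀, lt_of_lt_of_le (by linarith) (hNge s₀)⟩
    nlinarith
  set f : S → ℝ := fun s => Vstar s - Vπ s with hf
  set gap : S → ℝ := fun s => (∑ a, πstar s a * Qstar s a - Ω (πstar s))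
      - (∑ a, π s a * Qstar s a - Ω (π s)) with hgapdef
  have hgap0 : ∀ s, 0 ≤ gap s := fun s => sub_nonneg.2 (hmax s (π s) (hπ s))
  -- Bellman-type identity for f
  have key1 : ∀ s, ∑ a, π s a * Qstar s a - ∑ a, π s a * Qπ s a
      = γ * ∑ s', (∑ a, P s a s' * π s a) * f s' := by
    intro s
    have h1 : ∑ a, π s a * Qstar s a - ∑ a, π s a * Qπ s a
        = ∑ a, π s a * (γ * ∑ s', P s a s' * f s') := by
      rw [← Finset.sum_sub_distrib]
      apply Finset.sum_congr rfl
      intro a _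
      rw [← mul_sub, hQstar, hQπ]
      congr 1
      have : ∑ s', P s a s' * f s' = ∑ s', P s a s' * Vstar s' - ∑ s', P s a s' * Vπ s' := by
        rw [← Finset.sum_sub_distrib]
        exact Finset.sum_congr rfl fun s' _ => by simp [hf]; ring
      rw [this]
      ring
    rw [h1, Finset.mul_sum]
    have hl : ∀ a, π s a * (γ * ∑ s', P s a s' * f s')
        = ∑ s', γ * (π s a * (P s a s' * f s')) := by
      intro a
      rw [Finset.mul_sum, Finset.mul_sum]
      exact Finset.sum_congr rfl fun _ _ => by ring
    simp only [hl]
    rw [Finset.sum_comm]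
    apply Finset.sum_congr rfl
    intro s' _
    rw [Finset.sum_mul, Finset.mul_sum]
    exact Finset.sum_congr rfl fun a _ => by ring
  have hbell : ∀ s, f s = gap s + γ * ∑ s', (∑ a, P s a s' * π s a) * f s' := by
    intro s
    have h1 := key1 s
    have h2 : f s = Vstar s - Vπ s := rfl
    rw [h2, hVstar s, hVπ s]
    simp only [hgapdef]
    linarith
  -- the key sum identity
  have h2 : ∑ s, μ s * (γ * ∑ s', (∑ a, P s a s' * π s a) * f s')
      = ∑ s', (μ s' - (1 - γ) * ρ s') * f s' := by
    calc ∑ s, μ s * (γ * ∑ s', (∑ a, P s a s' * π s a) * f s')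
        = ∑ s, ∑ s', γ * ((∑ a, P s a s' * π s a) * μ s * f s') := by
          apply Finset.sum_congr rfl
          intro s _
          rw [Finset.mul_sum, Finset.mul_sum]
          exact Finset.sum_congr rfl fun s' _ => by ring
      _ = ∑ s', (γ * ∑ s, (∑ a, P s a s' * π s a) * μ s) * f s' := by
          rw [Finset.sum_comm]
          apply Finset.sum_congr rfl
          intro s' _
          rw [Finset.mul_sum, Finset.sum_mul]
          exact Finset.sum_congr rfl fun s _ => by ring
      _ = ∑ s', (μ s' - (1 - γ) * ρ s') * f s' := by
          apply Finset.sum_congr rfl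
          intro s' _
          have := hμ s'
          have h3 : γ * ∑ s, (∑ a, P s a s' * π s a) * μ s = μ s' - (1 - γ) * ρ s' := by
            linarith
          rw [h3]
  have hkey : ∑ s, μ s * gap s = (1 - γ) * ∑ s, ρ s * f s := by
    calc ∑ s, μ s * gap s
        = ∑ s, (μ s * f s - μ s * (γ * ∑ s', (∑ a, P s a s' * π s a) * f s')) := by
          apply Finset.sum_congr rfl
          intro s _
          have := hbell s
          have hg : gap s = f s - γ * ∑ s', (∑ a, P s a s' * π s a) * f s' := by linarith
          rw [hg]
          ring
      _ = ∑ s, μ s * f s - ∑ s, μ s * (γ * ∑ s', (∑ a, P s a s' * π s a) * f s') :=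
          Finset.sum_sub_distrib _ _
      _ = ∑ s, μ s * f s - ∑ s', (μ s' - (1 - γ) * ρ s') * f s' := by rw [h2]
      _ = (1 - γ) * ∑ s, ρ s * f s := by
          rw [← Finset.sum_sub_distrib, Finset.mul_sum]
          exact Finset.sum_congr rfl fun s _ => by ring
  -- Bregman divergence bounded by the gap
  have hDgap : ∀ s, Ω (π s) - Ω (πstar s) - fderiv ℝ Ω (πstar s) (π s - πstar s) ≤ gap s := by
    intro s
    have h := firstorder Ω hΩdiff (Qstar s) (πstar s) (π s) (hπstar s) (hπ s) (hmax s)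
    have hsplit : ∑ a, (π s a - πstar s a) * Qstar s a
        = ∑ a, π s a * Qstar s a - ∑ a, πstar s a * Qstar s a := by
      rw [← Finset.sum_sub_distrib]
      exact Finset.sum_congr rfl fun a _ => by ring
    rw [hsplit] at h
    simp only [hgapdef]
    linarith
  constructor
  · calc ∑ s, μ s * (Ω (π s) - Ω (πstar s) - fderiv ℝ Ω (πstar s) (π s - πstar s))
        ≤ ∑ s, μ s * gap s :=
          Finset.sum_le_sum fun s _ => mul_le_mul_of_nonneg_left (hDgap s) (hμ0 s)
      _ = (1 - γ) * ∑ s, ρ s * f s := hkey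
      _ ≤ ε := hsub
  · intro h0 s hs
    have hzero : ∑ s, μ s * gap s = 0 := by rw [hkey]; exact h0
    have hterm : μ s * gap s = 0 := by
      have := (Finset.sum_eq_zero_iff_of_nonneg
        (fun s _ => mul_nonneg (hμ0 s) (hgap0 s))).1 hzero s (Finset.mem_univ s)
      exact this
    have hgs : gap s = 0 := by
      rcases mul_eq_zero.1 hterm with h | h
      · exact absurd h (ne_of_gt hs)
      · exact h
    by_contra hne
    set q : A → ℝ := (1/2 : ℝ) • π s + (1/2 : ℝ) • πstar s with hq
    have hqmem : q ∈ stdSimplex ℝ A :=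
      (convex_stdSimplex ℝ A) (hπ s) (hπstar s) (by norm_num) (by norm_num) (by norm_num)
    have hstrict : Ω q < (1/2 : ℝ) * Ω (π s) + (1/2 : ℝ) * Ω (πstar s) := by
      have := hΩconv.2 (hπ s) (hπstar s) hne (by norm_num : (0:ℝ) < 1/2)
        (by norm_num : (0:ℝ) < 1/2) (by norm_num)
      simpa [hq, smul_eq_mul] using this
    have hqsum : ∑ a, q a * Qstar s a
        = (1/2 : ℝ) * ∑ a, π s a * Qstar s a + (1/2 : ℝ) * ∑ a, πstar s a * Qstar s a := by
      simp only [hq, Pi.add_apply, Pi.smul_apply, smul_eq_mul]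
      rw [Finset.mul_sum, Finset.mul_sum, ← Finset.sum_add_distrib]
      exact Finset.sum_congr rfl fun a _ => by ring
    have hqmax := hmax s q hqmem
    have hgap_eq : ∑ a, π s a * Qstar s a - Ω (π s)
        = ∑ a, πstar s a * Qstar s a - Ω (πstar s) := by
      have : gap s = (∑ a, πstar s a * Qstar s a - Ω (πstar s))
          - (∑ a, π s a * Qstar s a - Ω (π s)) := rfl
      rw [this] at hgs
      linarith
    rw [hqsum] at hqmax
    linarith
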